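/- Let R be a ring and A a left R-module. If β : Hom(A,-) ⟶ Hom(R,-) is a natural transformation of additive functors such that β_M(g) = 0 for every module M and every homomorphism g : A → M that factors through a projective module, then the element a := (β_A(id_A))(1) ∈ A lies in the Bass torsion t(A). -/

import Mathlib

open CategoryTheory Opposite

universe u

variable {R : Type u} [Ring R]

/-- The Bass torsion of a module: the elements killed by every linear form. -/
def bassTorsion (R : Type u) [Ring R] (M : Type u) [AddCommGroup M] [Module R M] :
    Submodule R M where
  carrier := {a | ∀ h : M →ₗ[R] R, h a = 0}
  zero_mem' := by intro h; simp
  add_mem' := by intro a b ha hb h; simp [map_add, ha h, hb h]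
  smul_mem' := by intro r a ha h; rw [map_smul]; simp [ha h]

/-- A homomorphism factors through a projective module. -/
def FactorsThroughProjective {A M : ModuleCat.{u} R} (g : A ⟶ M) : Prop :=
  ∃ (P : ModuleCat.{u} R) (p : A ⟶ P) (q : P ⟶ M), Module.Projective R P ∧ p ≫ q = g

/-- The forgetful functor `Hom(R,-)`. -/
def forgetfulFunctor (R : Type u) [Ring R] : ModuleCat.{u} R ⥤ AddCommGrpCat.{u} :=
  preadditiveCoyoneda.obj (op (ModuleCat.of R R))

/-- An element of the value of the forgetful functor, viewed as a linear map `R → A`. -/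
def toHom {A : ModuleCat.{u} R} (x : (forgetfulFunctor R).obj A) :
    ModuleCat.of R R ⟶ A := x

/-- if `β : Hom(A,-) ⟶ Hom(R,-)` is a natural transformation vanishing on
every homomorphism that factors through a projective module, then `(β_A(id_A))(1)`
lies in the Bass torsion `t(A)`. -/
theorem statement1 (R : Type u) [Ring R] (A : ModuleCat.{u} R)
    (β : preadditiveCoyoneda.obj (op A) ⟶ forgetfulFunctor R)
    (hβ : ∀ (M : ModuleCat.{u} R) (g : A ⟶ M),
      FactorsThroughProjective g → β.app M g = 0) :
    toHom (β.app A (𝟙 A)) (1 : R) ∈ bassTorsion R A := by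
  intro h
  let h' : A ⟶ ModuleCat.of R R := ModuleCat.ofHom h
  have hfac : FactorsThroughProjective h' :=
    ⟨ModuleCat.of R R, h', 𝟙 _, (inferInstance : Module.Projective R R), Category.comp_id _⟩
  have hz : β.app (ModuleCat.of R R) h' = 0 := hβ _ _ hfac
  have hnat := congrArg (fun f => f (𝟙 A)) (β.naturality h')
  dsimp only at hnat
  have e1 : ((preadditiveCoyoneda.obj (op A)).map h' ≫ β.app (ModuleCat.of R R)) (𝟙 A)
      = β.app (ModuleCat.of R R) (𝟙 A ≫ h') := rfl
  have e2 : (β.app A ≫ (forgetfulFunctor R).map h') (𝟙 A)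
      = toHom (β.app A (𝟙 A)) ≫ h' := rfl
  have key : toHom (β.app A (𝟙 A)) ≫ h' = 0 := by
    rw [← e2, ← hnat, e1, Category.id_comp, hz]; rfl
  calc h (toHom (β.app A (𝟙 A)) (1 : R)) = (toHom (β.app A (𝟙 A)) ≫ h') (1 : R) := rfl
    _ = 0 := by rw [key]; rfl
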